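/- arXiv:1405.4132 — 7 statements merged into one kernel-verified Lean document; each statement's English description precedes it below -/
import Mathlib

section
/- Let T be a tree and let e, f be two distinct edges of T. Let T_e be a component of T − e and T_f a component of T − f, and suppose |V(T_e)| + |V(T_f)| ≤ |V(T)|. Then either T_e ⊆ T_f, or T_f ⊆ T_e, or T_e and T_f are vertex-disjoint. -/
open SimpleGraph

private lemma reach_endpoint {V : Type} {G : SimpleGraph V} {u v z : V}
    (w : G.Walk z u) :
    (G.deleteEdges {s(u,v)}).Reachable z u ∨ (G.deleteEdges {s(u,v)}).Reachable z v := by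
  induction w with
  | nil => exact Or.inl (Reachable.refl _)
  | @cons a b c h p ih =>
    by_cases hab : s(a, b) = s(c, v)
    · rw [Sym2.eq_iff] at hab
      rcases hab with ⟨rfl, rfl⟩ | ⟨rfl, rfl⟩
      · exact Or.inl (Reachable.refl _)
      · exact Or.inr (Reachable.refl _)
    · have hadj : (G.deleteEdges {s(c,v)}).Adj a b := by
        rw [SimpleGraph.deleteEdges_adj]
        exact ⟨h, by simpa using hab⟩
      rcases ih with h1 | h1
      · exact Or.inl (hadj.reachable.trans h1)
      · exact Or.inr (hadj.reachable.trans h1)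

private lemma cross_lemma {V : Type} {G : SimpleGraph V} {e : Sym2 V} {w₁ w₂ x y : V}
    (hr : (G.deleteEdges {e}).Reachable x y)
    (hnb : ¬ (G.deleteEdges {s(w₁,w₂)}).Reachable x y) :
    (G.deleteEdges {e}).Reachable x w₁ ∨ (G.deleteEdges {e}).Reachable x w₂ := by
  classical
  obtain ⟨w⟩ := hr
  by_cases hmem : s(w₁,w₂) ∈ w.edges
  · exact Or.inl ⟨w.takeUntil w₁ (w.fst_mem_support_of_mem_edges hmem)⟩
  · exfalso
    apply hnb
    refine ⟨w.transfer _ fun ed hed => ?_⟩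
    rw [SimpleGraph.edgeSet_deleteEdges]
    refine ⟨?_, ?_⟩
    · have := w.edges_subset_edgeSet hed
      rw [SimpleGraph.edgeSet_deleteEdges] at this
      exact this.1
    · simp only [Set.mem_singleton_iff]
      rintro rfl
      exact hmem hed

private lemma bridge_not_reachable {V : Type} {G : SimpleGraph V} (hac : G.IsAcyclic)
    {u v : V} (h : G.Adj u v) : ¬ (G.deleteEdges {s(u,v)}).Reachable u v := by
  have hb := (isAcyclic_iff_forall_adj_isBridge.mp hac) h
  rw [isBridge_iff] at hb
  exact hb

private lemma core {V : Type} [Fintype V] {G : SimpleGraph V} (hT : G.IsTree)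
    {u₁ u₂ w₁ w₂ : V} (hu : G.Adj u₁ u₂) (hw : G.Adj w₁ w₂)
    (hef : s(u₁,u₂) ≠ s(w₁,w₂))
    {A B : Set V}
    (hAdef : ∀ x, x ∈ A ↔ (G.deleteEdges {s(u₁,u₂)}).Reachable x u₁)
    (hBdef : ∀ x, x ∈ B ↔ (G.deleteEdges {s(w₁,w₂)}).Reachable x w₁)
    (hcard : A.ncard + B.ncard ≤ Fintype.card V) :
    A ⊆ B ∨ B ⊆ A ∨ Disjoint A B := by
  classical
  set He := G.deleteEdges {s(u₁,u₂)} with hHe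
  set Hf := G.deleteEdges {s(w₁,w₂)} with hHf
  have hbe : ¬ He.Reachable u₁ u₂ := bridge_not_reachable hT.2 hu
  have hbf : ¬ Hf.Reachable w₁ w₂ := bridge_not_reachable hT.2 hw
  -- if x ∉ A then x is He-reachable to u₂
  have hreach2 : ∀ x, x ∉ A → He.Reachable x u₂ := by
    intro x hx
    obtain ⟨p⟩ := hT.1.preconnected x u₁
    rcases reach_endpoint (v := u₂) p with h1 | h1
    · exact absurd ((hAdef x).mpr h1) hx
    · exact h1
  -- w₁ and w₂ are in the same He-component
  have hwadj : He.Adj w₁ w₂ := by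
    rw [hHe, SimpleGraph.deleteEdges_adj]
    refine ⟨hw, ?_⟩
    simp only [Set.mem_singleton_iff]
    exact fun h => hef h.symm
  -- u₁ and u₂ are in the same Hf-component
  have huadj : Hf.Adj u₁ u₂ := by
    rw [hHf, SimpleGraph.deleteEdges_adj]
    exact ⟨hu, by simpa using hef⟩
  have hwA : w₁ ∈ A ↔ w₂ ∈ A := by
    rw [hAdef, hAdef]
    exact ⟨fun h => hwadj.symm.reachable.trans h, fun h => hwadj.reachable.trans h⟩
  have huB : u₁ ∈ B ↔ u₂ ∈ B := by
    rw [hBdef, hBdef]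
    exact ⟨fun h => huadj.symm.reachable.trans h, fun h => huadj.reachable.trans h⟩
  -- membership transfer along He-reachability
  have hmemA : ∀ x y, He.Reachable x y → (y ∈ A → x ∈ A) := by
    intro x y hxy hy
    rw [hAdef] at hy ⊢
    exact hxy.trans hy
  by_cases hw1 : w₁ ∈ A <;> by_cases hu1 : u₁ ∈ B
  · -- w's in A, u's in B: show A ∪ B = univ, then disjoint by cardinality
    right; right
    have huniv : A ∪ B = Set.univ := by
      ext x
      simp only [Set.mem_union, Set.mem_univ, iff_true]
      by_contra hx
      push_neg at hx
      obtain ⟨hxA, hxB⟩ := hx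
      have hr : He.Reachable x u₂ := hreach2 x hxA
      have hnb : ¬ Hf.Reachable x u₂ := by
        intro h
        exact hxB ((hBdef x).mpr (h.trans ((hBdef u₂).mp (huB.mp hu1))))
      rcases cross_lemma hr hnb with h1 | h1
      · exact hxA (hmemA x w₁ h1 hw1)
      · exact hxA (hmemA x w₂ h1 (hwA.mp hw1))
    by_contra hdis
    rw [Set.not_disjoint_iff] at hdis
    obtain ⟨x, hxA, hxB⟩ := hdis
    have hfin : A.Finite := Set.toFinite A
    have hfin' : B.Finite := Set.toFinite B
    have hcount := Set.ncard_union_add_ncard_inter A B hfin hfin'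
    rw [huniv, Set.ncard_univ, Nat.card_eq_fintype_card] at hcount
    have hpos : 0 < (A ∩ B).ncard := by
      rw [Set.ncard_pos (hfin.inter_of_left B)]
      exact ⟨x, hxA, hxB⟩
    omega
  · -- w's in A, u's not in B: B ⊆ A
    right; left
    intro x hxB
    by_contra hxA
    have hr : He.Reachable x u₂ := hreach2 x hxA
    have hnb : ¬ Hf.Reachable x u₂ := by
      intro h
      exact hu1 (huB.mpr ((hBdef u₂).mpr (h.symm.trans ((hBdef x).mp hxB))))
    rcases cross_lemma hr hnb with h1 | h1
    · exact hxA (hmemA x w₁ h1 hw1)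
    · exact hxA (hmemA x w₂ h1 (hwA.mp hw1))
  · -- w's not in A, u's in B: A ⊆ B
    left
    intro x hxA
    by_contra hxB
    have hr : He.Reachable x u₁ := (hAdef x).mp hxA
    have hnb : ¬ Hf.Reachable x u₁ := by
      intro h
      exact hxB ((hBdef x).mpr (h.trans ((hBdef u₁).mp hu1)))
    rcases cross_lemma hr hnb with h1 | h1
    · exact hw1 (hmemA w₁ x h1.symm hxA)
    · exact hw1 (hwA.mpr (hmemA w₂ x h1.symm hxA))
  · -- w's not in A, u's not in B: disjoint
    right; right
    rw [Set.disjoint_left]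
    intro x hxA hxB
    have hr : He.Reachable x u₁ := (hAdef x).mp hxA
    have hnb : ¬ Hf.Reachable x u₁ := by
      intro h
      exact hu1 ((hBdef u₁).mpr (h.symm.trans ((hBdef x).mp hxB)))
    rcases cross_lemma hr hnb with h1 | h1
    · exact hw1 (hmemA w₁ x h1.symm hxA)
    · exact hw1 (hwA.mpr (hmemA w₂ x h1.symm hxA))

private lemma comp_supp_char {V : Type} {G : SimpleGraph V} (hT : G.IsTree)
    {u₁ u₂ : V} (hu : G.Adj u₁ u₂) {A : Set V}
    (hA : ∃ c : (G.deleteEdges {s(u₁,u₂)}).ConnectedComponent, A = c.supp) :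
    (∀ x, x ∈ A ↔ (G.deleteEdges {s(u₁,u₂)}).Reachable x u₁) ∨
    (∀ x, x ∈ A ↔ (G.deleteEdges {s(u₁,u₂)}).Reachable x u₂) := by
  obtain ⟨c, rfl⟩ := hA
  obtain ⟨z, hz0⟩ := c.exists_rep
  have hz : (G.deleteEdges {s(u₁,u₂)}).connectedComponentMk z = c := hz0
  obtain ⟨p⟩ := hT.1.preconnected z u₁
  rcases reach_endpoint (v := u₂) p with h1 | h1
  · left
    intro x
    rw [ConnectedComponent.mem_supp_iff, ← hz, ConnectedComponent.eq]
    exact ⟨fun h => h.trans h1, fun h => h.trans h1.symm⟩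
  · right
    intro x
    rw [ConnectedComponent.mem_supp_iff, ← hz, ConnectedComponent.eq]
    exact ⟨fun h => h.trans h1, fun h => h.trans h1.symm⟩

/-- Let `T` be a tree and `e ≠ f` two edges. If `T_e` is a component of
`T − e` and `T_f` a component of `T − f` with `|V(T_e)| + |V(T_f)| ≤ |V(T)|`, then
`T_e ⊆ T_f`, `T_f ⊆ T_e`, or they are vertex-disjoint. -/
theorem stmt_0 {V : Type} [Fintype V] (G : SimpleGraph V) (hG : G.IsTree)
    (e f : Sym2 V) (he : e ∈ G.edgeSet) (hf : f ∈ G.edgeSet) (hef : e ≠ f)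
    (A B : Set V)
    (hA : ∃ c : (G.deleteEdges {e}).ConnectedComponent, A = c.supp)
    (hB : ∃ c : (G.deleteEdges {f}).ConnectedComponent, B = c.supp)
    (hcard : A.ncard + B.ncard ≤ Fintype.card V) :
    A ⊆ B ∨ B ⊆ A ∨ Disjoint A B := by
  induction e using Sym2.ind with
  | _ u₁ u₂ =>
  induction f using Sym2.ind with
  | _ w₁ w₂ =>
  rw [SimpleGraph.mem_edgeSet] at he hf
  have hA' := comp_supp_char hG he hA
  have hB' := comp_supp_char hG hf hB
  have hef' : s(u₂, u₁) = s(u₁, u₂) := Sym2.eq_swap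
  have hff' : s(w₂, w₁) = s(w₁, w₂) := Sym2.eq_swap
  rcases hA' with hA1 | hA1 <;> rcases hB' with hB1 | hB1
  · exact core hG he hf hef hA1 hB1 hcard
  · refine core hG he hf.symm (by rw [hff']; exact hef) hA1 ?_ hcard
    intro x; rw [hff']; exact hB1 x
  · refine core hG he.symm hf (by rw [hef']; exact hef) ?_ hB1 hcard
    intro x; rw [hef']; exact hA1 x
  · refine core hG he.symm hf.symm (by rw [hef', hff']; exact hef) ?_ ?_ hcard
    · intro x; rw [hef']; exact hA1 x
    · intro x; rw [hff']; exact hB1 x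
end

section
/- The graph G' constructed from any finite simple graph G by making V(G) a clique and adding, for each edge e = {u,v} of G, a new vertex adjacent exactly to u and v, is a chordal graph. -/
open SimpleGraph

/-- The graph `G'` on `V ∪ E`: `V` becomes a clique and each edge `e = {u,v}` of `G`
becomes a new vertex adjacent exactly to `u` and `v`. -/
def aug {V : Type} (G : SimpleGraph V) : SimpleGraph (V ⊕ G.edgeSet) where
  Adj x y :=
    match x, y with
    | Sum.inl u, Sum.inl v => u ≠ v
    | Sum.inl u, Sum.inr e => u ∈ (e : Sym2 V)
    | Sum.inr e, Sum.inl u => u ∈ (e : Sym2 V)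
    | Sum.inr _, Sum.inr _ => False
  symm := by
    constructor
    rintro (u | e) (v | f) h
    · exact h.symm
    · exact h
    · exact h
    · exact h.elim
  loopless := by
    constructor
    rintro (u | e) h
    · exact h rfl
    · exact h

/-- A graph is chordal if every cycle of length at least 4 has a chord, i.e. an edge
of the graph joining two vertices of the cycle that is not an edge of the cycle. -/
def IsChordal {α : Type} (G : SimpleGraph α) : Prop :=
  ∀ (v : α) (c : G.Walk v v), c.IsCycle → 4 ≤ c.length →
    ∃ x y, x ∈ c.support ∧ y ∈ c.support ∧ G.Adj x y ∧ s(x, y) ∉ c.edges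

lemma path_no_endpoint_edge {α : Type*} {G : SimpleGraph α} {a b : α}
    (q : G.Walk a b) (hq : q.IsPath) (hl : 2 ≤ q.length) : s(a, b) ∉ q.edges := by
  cases q with
  | nil => simp
  | cons h' q' =>
    intro hmem
    rw [Walk.edges_cons, List.mem_cons] at hmem
    rcases hmem with heq | hmem
    · rw [Sym2.eq_iff] at heq
      rcases heq with ⟨-, rfl⟩ | ⟨rfl, rfl⟩
      · have : q' = Walk.nil := Walk.isPath_iff_eq_nil.mp hq.of_cons
        subst this
        simp at hl
      · exact h'.ne rfl
    · have : a ∈ q'.support := Walk.fst_mem_support_of_mem_edges q' hmem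
      exact ((Walk.cons_isPath_iff _ _).mp hq).2 this

/-- the graph `G'` obtained from any finite simple graph `G` is chordal. -/
theorem stmt_2 {V : Type} [Fintype V] (G : SimpleGraph V) :
    IsChordal (aug G) := by
  classical
  intro v c hc hl
  obtain hE | hE := em (∃ e : G.edgeSet, Sum.inr e ∈ c.support)
  · -- some edge-vertex on the cycle: rotate to start there
    obtain ⟨e, he⟩ := hE
    have hcyc' : (c.rotate _ he).IsCycle := hc.rotate he
    have hlen' : (c.rotate _ he).length = c.length := by
      rw [← Walk.length_edges, ← Walk.length_edges]
      exact (c.rotate_edges _ he).perm.length_eq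
    obtain ⟨w, h₁, p, hp⟩ := Walk.not_nil_iff.mp hcyc'.not_nil
    obtain ⟨x, q, h', hq⟩ := Walk.exists_cons_eq_concat h₁ p
    rw [hp] at hcyc' hlen'
    rw [hq] at hcyc' hlen'
    -- q : Walk (inr e) x, h' : Adj x (inr e)
    cases x with
    | inr f => exact absurd h' (by simp [aug])
    | inl u' =>
    have hqnil : ¬ q.Nil := by
      rw [Walk.not_nil_iff_lt_length]
      have := hlen'
      rw [Walk.length_concat] at this
      omega
    obtain ⟨y, hq1, q', hq'⟩ := Walk.not_nil_iff.mp hqnil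
    cases y with
    | inr f => exact absurd hq1 (by simp [aug])
    | inl u =>
    rw [hq', Walk.concat_cons] at hcyc' hlen'
    -- now (c.rotate _ he) = cons hq1 (q'.concat h'), q' : Walk (inl u) (inl u')
    rw [Walk.cons_isCycle_iff] at hcyc'
    obtain ⟨hpath, hedge⟩ := hcyc'
    have hq'path : q'.IsPath := by
      have := hpath.support_nodup
      rw [Walk.support_concat, List.nodup_append] at this
      rw [Walk.isPath_def]
      exact this.1
    have hq'len : 2 ≤ q'.length := by
      rw [Walk.length_cons, Walk.length_concat] at hlen'
      omega
    have huu' : u ≠ u' := by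
      rintro rfl
      have : q' = Walk.nil := Walk.isPath_iff_eq_nil.mp hq'path
      rw [this] at hq'len
      simp at hq'len
    -- the chord
    refine ⟨Sum.inl u, Sum.inl u', ?_, ?_, huu', ?_⟩
    · have hmem : Sum.inl u ∈ (c.rotate _ he).support.tail := by
        rw [hp, hq, hq', Walk.concat_cons, Walk.support_cons]
        simp
      exact List.mem_of_mem_tail ((c.support_rotate _ he).perm.mem_iff.mp hmem)
    · have hmem : Sum.inl u' ∈ (c.rotate _ he).support.tail := by
        rw [hp, hq, hq', Walk.concat_cons, Walk.support_cons]
        simp only [List.tail_cons, Walk.support_concat, List.concat_eq_append,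
          List.mem_append]
        exact Or.inl q'.end_mem_support
      exact List.mem_of_mem_tail ((c.support_rotate _ he).perm.mem_iff.mp hmem)
    · intro hin
      have hin' : s(Sum.inl u, Sum.inl u') ∈ (c.rotate _ he).edges :=
        (c.rotate_edges _ he).perm.mem_iff.mpr hin
      rw [hp, hq, hq', Walk.concat_cons, Walk.edges_cons, Walk.edges_concat,
        List.mem_cons, List.concat_eq_append, List.mem_append] at hin'
      rcases hin' with h1 | h2 | h3
      · rw [Sym2.eq_iff] at h1
        rcases h1 with ⟨h, -⟩ | ⟨-, h⟩ <;> exact Sum.inl_ne_inr h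
      · exact path_no_endpoint_edge q' hq'path hq'len h2
      · rw [List.mem_singleton, Sym2.eq_iff] at h3
        rcases h3 with ⟨-, h⟩ | ⟨h, -⟩ <;> exact Sum.inl_ne_inr h
  · -- every vertex of the cycle is in V
    push_neg at hE
    obtain ⟨w, h₁, p, rfl⟩ := Walk.not_nil_iff.mp hc.not_nil
    have hpnil : ¬ p.Nil := by
      rw [Walk.not_nil_iff_lt_length]
      rw [Walk.length_cons] at hl
      omega
    obtain ⟨z, h₂, q, rfl⟩ := Walk.not_nil_iff.mp hpnil
    rw [Walk.cons_isCycle_iff] at hc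
    have hqpath : q.IsPath := hc.1.of_cons
    have hqlen : 2 ≤ q.length := by
      simp only [Walk.length_cons] at hl
      omega
    have hvz : v ≠ z := by
      rintro rfl
      have : q = Walk.nil := Walk.isPath_iff_eq_nil.mp hqpath
      rw [this] at hqlen
      simp at hqlen
    obtain ⟨a, rfl⟩ : ∃ a, v = Sum.inl a := by
      cases v with
      | inl a => exact ⟨a, rfl⟩
      | inr f => exact absurd ((Walk.cons h₁ (Walk.cons h₂ q)).start_mem_support) (hE f)
    obtain ⟨b, rfl⟩ : ∃ b, z = Sum.inl b := by
      cases z with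
      | inl b => exact ⟨b, rfl⟩
      | inr f =>
        refine absurd ?_ (hE f)
        simp [Walk.support_cons]
    refine ⟨Sum.inl a, Sum.inl b, (Walk.cons h₁ (Walk.cons h₂ q)).start_mem_support, ?_,
      fun h => hvz (congrArg Sum.inl h), ?_⟩
    · simp [Walk.support_cons]
    · intro hin
      rw [Walk.edges_cons, Walk.edges_cons, List.mem_cons, List.mem_cons] at hin
      rcases hin with h1 | h2 | h3
      · rw [Sym2.eq_iff] at h1
        rcases h1 with ⟨-, h⟩ | ⟨h, -⟩
        · exact h₂.ne h.symm
        · exact h₁.ne h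
      · rw [Sym2.eq_iff] at h2
        rcases h2 with ⟨h, -⟩ | ⟨h, -⟩
        · exact h₁.ne h
        · exact hvz h
      · rw [Sym2.eq_swap] at h3
        exact path_no_endpoint_edge q hqpath hqlen h3
end

section
/- Let T be a tree with more than one vertex in which every leaf has a neighbour of degree at least 2, and suppose that whenever a vertex is adjacent to a leaf, all its neighbours but one are leaves. Let α₁ be the minimum, over edges e of T, of the smaller number of vertices among the two components of T − e, subject to both components having at least 2 vertices; assume α₁ ≥ 2 exists. Then every component S of T − e (for an edge e) with exactly α₁ vertices and 2 ≤ α₁ ≤ |V(T)| − 2 is a star, i.e., S has a vertex adjacent to all other vertices of S, each of which is a leaf of T. -/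
open SimpleGraph

/-- The vertex set of the component of `T − s(a,b)` containing `a`. -/
def compSet {V : Type} (G : SimpleGraph V) (a b : V) : Set V :=
  {v | (G.deleteEdges {s(a, b)}).Reachable a v}

/-- `compSet G a b` is a *shape*: `s(a,b)` is an edge and the component of `a` in
`T − s(a,b)` has at least `2` vertices and misses at least `2` vertices. -/
def IsShape {V : Type} [Fintype V] (G : SimpleGraph V) (a b : V) : Prop :=
  G.Adj a b ∧ 2 ≤ (compSet G a b).ncard ∧ (compSet G a b).ncard + 2 ≤ Fintype.card V

/-- `v` is a leaf: it has exactly one neighbour. -/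
def IsLeaf {V : Type} (G : SimpleGraph V) (v : V) : Prop :=
  (G.neighborSet v).ncard = 1

section Aux

variable {V : Type} {G : SimpleGraph V}

/-- In an acyclic graph, every edge is a bridge. -/
lemma my_bridge (hG : G.IsAcyclic) {a b : V} (hab : G.Adj a b) :
    ¬ (G.deleteEdges {s(a, b)}).Reachable a b :=
  ((isAcyclic_iff_forall_adj_isBridge.mp hG) hab)

/-- Transferring a walk from one edge-deleted graph to another. -/
lemma my_reach_trans {s t : Set (Sym2 V)} {x y : V} (p : (G.deleteEdges s).Walk x y)
    (h : ∀ e ∈ p.edges, e ∉ t) : (G.deleteEdges t).Reachable x y :=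
  ⟨p.transfer _ (fun e he => by
    have h1 := p.edges_subset_edgeSet he
    rw [edgeSet_deleteEdges] at h1 ⊢
    exact ⟨h1.1, h e he⟩)⟩

lemma my_key [Fintype V] {a b : V} (hG : G.IsTree) {α₁ : ℕ} (hα₁ : 2 ≤ α₁)
    (hmin : ∀ a b, IsShape G a b → α₁ ≤ (compSet G a b).ncard)
    (hab : IsShape G a b) (hS : (compSet G a b).ncard = α₁) :
    ∀ v, v ∈ compSet G a b →
    ∀ (u : V) (h : (G.deleteEdges {s(a, b)}).Adj v u)
      (q : (G.deleteEdges {s(a, b)}).Walk u a),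
      (SimpleGraph.Walk.cons h q).IsPath →
      G.neighborSet v = {u} ∧ IsLeaf G v ∧ u ∈ compSet G a b := by
  intro v hv u h q hq
  haveI := Classical.decEq V
  have hvu : G.Adj v u := (deleteEdges_adj.mp h).1
  -- edges of `q` avoid `s(v,u)`
  have hqe : s(v, u) ∉ q.edges := (Walk.isTrail_cons h q |>.mp hq.isTrail).2
  -- `u` reaches `a` in `G − s(v,u)`
  have hua : (G.deleteEdges {s(v, u)}).Reachable u a :=
    my_reach_trans q (fun e he hes => hqe (by rwa [Set.mem_singleton_iff.mp hes] at he))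
  -- `v` does not reach `a` in `G − s(v,u)`
  have hnav : ¬ (G.deleteEdges {s(v, u)}).Reachable v a := by
    intro hr
    exact my_bridge hG.IsAcyclic hvu (hr.trans hua.symm)
  -- the component of `v` in `G − s(v,u)` is inside `compSet G a b \ {a}`
  have hsub : compSet G v u ⊆ compSet G a b \ {a} := by
    rintro w hw
    have hw2 : (G.deleteEdges {s(v, u)}).Reachable v w := hw
    obtain ⟨p'⟩ := hw2
    have hab' : s(a, b) ∉ p'.edges := by
      intro he
      have haS : a ∈ p'.support := p'.fst_mem_support_of_mem_edges he
      exact hnav ⟨p'.takeUntil a haS⟩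
    refine ⟨(hv : (G.deleteEdges {s(a, b)}).Reachable a v).trans
      (my_reach_trans p' (fun e he hes => hab' (by rwa [Set.mem_singleton_iff.mp hes] at he))),
      ?_⟩
    rintro rfl
    exact hnav hw
  have haab : a ∈ compSet G a b := Reachable.refl a
  have hcard1 : (compSet G v u).ncard ≤ α₁ - 1 := by
    calc (compSet G v u).ncard ≤ (compSet G a b \ {a}).ncard :=
          Set.ncard_le_ncard hsub (Set.toFinite _)
      _ = α₁ - 1 := by rw [Set.ncard_diff_singleton_of_mem haab, hS]
  have hnotshape : ¬ IsShape G v u := by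
    intro hsh
    have := hmin v u hsh
    omega
  have hvv : v ∈ compSet G v u := Reachable.refl v
  have hcomp1 : (compSet G v u).ncard = 1 := by
    have hpos : 0 < (compSet G v u).ncard :=
      (Set.ncard_pos (Set.toFinite _)).mpr ⟨v, hvv⟩
    have h3 : (compSet G v u).ncard + 2 ≤ Fintype.card V := by
      have := hab.2.2
      omega
    by_contra hne
    exact hnotshape ⟨hvu, by omega, h3⟩
  have hcompv : compSet G v u = {v} := by
    obtain ⟨x, hx⟩ := Set.ncard_eq_one.mp hcomp1
    rw [hx] at hvv ⊢
    rw [Set.mem_singleton_iff.mp hvv]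
  have hnbr : G.neighborSet v = {u} := by
    ext x
    simp only [mem_neighborSet, Set.mem_singleton_iff]
    constructor
    · intro hvx
      by_contra hxu
      have hadj : (G.deleteEdges {s(v, u)}).Adj v x := by
        rw [deleteEdges_adj]
        exact ⟨hvx, fun hes => hxu (Sym2.congr_right.mp (Set.mem_singleton_iff.mp hes))⟩
      have : x ∈ compSet G v u := ⟨hadj.toWalk⟩
      rw [hcompv, Set.mem_singleton_iff] at this
      exact G.loopless.irrefl v (this ▸ hvx)
    · rintro rfl; exact hvu
  refine ⟨hnbr, ?_, ⟨q.reverse⟩⟩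
  unfold IsLeaf
  rw [hnbr, Set.ncard_singleton]

end Aux

/-- in a tree where every leaf has a neighbour of degree at least 2 and
every vertex adjacent to a leaf has all neighbours but one being leaves, every shape
whose number of vertices is the minimum shape size `α₁ ≥ 2` is a star whose
non-central vertices are leaves of `T`. -/
theorem stmt_3 {V : Type} [Fintype V] (G : SimpleGraph V) (hG : G.IsTree)
    (hcard : 2 ≤ Fintype.card V)
    (hleaf : ∀ v, IsLeaf G v → ∀ u, G.Adj v u → 2 ≤ (G.neighborSet u).ncard)
    (hstruct : ∀ v u, G.Adj v u → IsLeaf G u →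
      ∀ x y, G.Adj v x → G.Adj v y → ¬ IsLeaf G x → ¬ IsLeaf G y → x = y)
    (α₁ : ℕ) (hα₁ : 2 ≤ α₁)
    (hmin : ∀ a b, IsShape G a b → α₁ ≤ (compSet G a b).ncard)
    (hex : ∃ a b, IsShape G a b ∧ (compSet G a b).ncard = α₁) :
    ∀ a b, IsShape G a b → (compSet G a b).ncard = α₁ →
      ∃ c ∈ compSet G a b, ∀ v ∈ compSet G a b, v ≠ c →
        G.Adj c v ∧ IsLeaf G v := by
  intro a b hab hS
  haveI := Classical.decEq V
  refine ⟨a, Reachable.refl a, ?_⟩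
  intro v hv hva
  -- get a path from `v` to `a` in `G − s(a,b)`
  have hv2 : (G.deleteEdges {s(a, b)}).Reachable a v := hv
  obtain ⟨w⟩ := hv2
  have hp : (w.toPath : (G.deleteEdges {s(a, b)}).Walk a v).IsPath := w.toPath.2
  set p : (G.deleteEdges {s(a, b)}).Walk v a := (w.toPath : (G.deleteEdges {s(a, b)}).Walk a v).reverse with hpdef
  have hpp : p.IsPath := hp.reverse
  obtain ⟨u, h, q, hq⟩ := Walk.exists_eq_cons_of_ne hva p
  rw [hq] at hpp
  obtain ⟨hnbrv, hleafv, huab⟩ := my_key hG hα₁ hmin hab hS v hv u h q hpp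
  have hvu : G.Adj v u := (deleteEdges_adj.mp h).1
  -- show `u = a`
  have hua : u = a := by
    by_contra hune
    obtain ⟨u2, h2, q2, hq2⟩ := Walk.exists_eq_cons_of_ne hune q
    have hq2p : (Walk.cons h2 q2).IsPath := hq2 ▸ hpp.of_cons
    obtain ⟨hnbru, _, _⟩ := my_key hG hα₁ hmin hab hS u huab u2 h2 q2 hq2p
    have hvmem : v ∈ G.neighborSet u := hvu.symm
    rw [hnbru, Set.mem_singleton_iff] at hvmem
    -- then `v` appears in the support of `q`, contradicting `hpp`
    have : v ∉ q.support := (Walk.cons_isPath_iff h q |>.mp hpp).2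
    apply this
    rw [hq2, Walk.support_cons, hvmem]
    exact List.mem_cons_of_mem _ (Walk.start_mem_support q2)
  subst hua
  exact ⟨hvu.symm, hleafv⟩
end

section
/- Let T be a tree and let σ = ((σ₁,w₁),…,(σ_t,w_t)) be an α-situation with α ≤ w(T)/2 (where w(T) is the total vertex weight of T, all weights positive). For each i, let T_i be a shape of T isomorphic to (σ_i, w_i). If for all i ≠ j, T_i is not a subtree of T_j, then the shapes T₁,…,T_t are pairwise vertex-disjoint and there exists a subtree T' of T, disjoint from all T_i, together with t distinct edges e₁,…,e_t each having exactly one end in V(T'), such that T_i is the component of T − e_i not containing T', for each i. -/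
open SimpleGraph

lemma mem_compSet_self {V : Type} (G : SimpleGraph V) (a b : V) :
    a ∈ compSet G a b :=
  Reachable.refl a

/-- The shape of `(G, w)` rooted at `a` given by the edge `s(a,b)` is isomorphic, as a
rooted weighted tree, to the rooted weighted tree `(H, r, u)`. -/
def ShapeIsoTo {V R : Type} (G : SimpleGraph V) (w : V → ℕ+) (a b : V)
    (H : SimpleGraph R) (r : R) (u : R → ℕ+) : Prop :=
  ∃ φ : G.induce (compSet G a b) ≃g H,
    φ ⟨a, mem_compSet_self G a b⟩ = r ∧ ∀ v, u (φ v) = w v.val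

section Aux

variable {V : Type} {G : SimpleGraph V} {a b : V}

lemma compSet_disjoint (hG : G.IsTree) (hab : G.Adj a b) :
    Disjoint (compSet G a b) (compSet G b a) := by
  rw [Set.disjoint_left]
  intro v hva hvb
  have h1 : (G.deleteEdges {s(a, b)}).Reachable b v := by
    rw [Sym2.eq_swap]; exact hvb
  have hreach : (G.deleteEdges {s(a, b)}).Reachable a b := hva.trans h1.symm
  have hbr : G.IsBridge s(a, b) :=
    (isAcyclic_iff_forall_adj_isBridge.mp hG.IsAcyclic) hab
  exact (isBridge_iff.mp hbr) hreach

lemma aux_union' : ∀ {x c : V}, G.Walk x c → c ∈ compSet G a b ∪ compSet G b a →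
    x ∈ compSet G a b ∪ compSet G b a := by
  intro x c q
  induction q with
  | nil => exact id
  | @cons x y _ h p ih =>
    intro hc
    have ih := ih hc
    by_cases he : s(x, y) = s(a, b)
    · rcases Sym2.eq_iff.mp he with ⟨rfl, rfl⟩ | ⟨rfl, rfl⟩
      · exact Or.inl (mem_compSet_self G _ _)
      · exact Or.inr (mem_compSet_self G _ _)
    · have hadj : (G.deleteEdges {s(a, b)}).Adj x y := by
        simp only [deleteEdges_adj, Set.mem_singleton_iff]
        exact ⟨h, he⟩
      have hadj' : (G.deleteEdges {s(b, a)}).Adj x y := by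
        simp only [deleteEdges_adj, Set.mem_singleton_iff]
        exact ⟨h, fun hxy => he (by rw [hxy, Sym2.eq_swap])⟩
      rcases ih with hy | hy
      · exact Or.inl (hy.trans hadj.symm.reachable)
      · exact Or.inr (hy.trans hadj'.symm.reachable)

lemma aux_union {x : V} (q : G.Walk x a) : x ∈ compSet G a b ∪ compSet G b a :=
  aux_union' q (Or.inl (mem_compSet_self G a b))

lemma compSet_compl (hG : G.IsTree) (hab : G.Adj a b) :
    compSet G b a = (compSet G a b)ᶜ := by
  ext v
  simp only [Set.mem_compl_iff]
  constructor
  · intro hv hv'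
    exact Set.disjoint_left.mp (compSet_disjoint hG hab) hv' hv
  · intro hv
    obtain ⟨q⟩ := hG.isConnected.preconnected v a
    rcases aux_union q with h | h
    · exact absurd h hv
    · exact h

lemma reach_swap {c d x y : V} (h : (G.deleteEdges {s(c, d)}).Reachable x y) :
    (G.deleteEdges {s(d, c)}).Reachable x y := by
  rw [Sym2.eq_swap]; exact h

lemma one_side {c d : V} (hc : c ∉ compSet G a b) :
    ∀ v ∈ compSet G a b, (G.deleteEdges {s(c, d)}).Reachable a v := by
  classical
  intro v hv
  obtain ⟨q⟩ := hv
  have hsup : ∀ x ∈ q.support, x ∈ compSet G a b := by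
    intro x hx; exact ⟨q.takeUntil x hx⟩
  refine ⟨q.transfer _ ?_⟩
  intro e he
  have h1 : e ∈ G.edgeSet \ {s(a, b)} := by
    rw [← edgeSet_deleteEdges]; exact q.edges_subset_edgeSet he
  rw [edgeSet_deleteEdges]
  refine ⟨h1.1, ?_⟩
  intro hee
  rw [Set.mem_singleton_iff] at hee
  exact hc (hsup c (q.fst_mem_support_of_mem_edges (hee ▸ he)))

lemma support_subset_compSet (hG : G.IsTree) (hab : G.Adj a b) {x y : V}
    (p : G.Walk x y) (hp : p.IsPath) (hx : x ∈ compSet G a b) (hy : y ∈ compSet G a b) :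
    ∀ v ∈ p.support, v ∈ compSet G a b := by
  classical
  obtain ⟨q⟩ := hx.symm.trans hy
  have hq : ∀ e ∈ q.edges, e ∈ G.edgeSet := by
    intro e he
    have := q.edges_subset_edgeSet he
    rw [edgeSet_deleteEdges] at this
    exact this.1
  have hpq : p = (q.transfer G hq).bypass := by
    have := hG.IsAcyclic.path_unique ⟨p, hp⟩ ⟨(q.transfer G hq).bypass,
      (q.transfer G hq).bypass_isPath⟩
    exact congrArg Subtype.val this
  have hedge : ∀ e ∈ p.edges, e ∉ ({s(a, b)} : Set (Sym2 V)) := by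
    intro e he hee
    rw [hpq] at he
    have h2 := (q.transfer G hq).edges_bypass_subset he
    rw [Walk.edges_transfer] at h2
    have h3 := q.edges_subset_edgeSet h2
    rw [edgeSet_deleteEdges] at h3
    exact h3.2 hee
  intro v hv
  have hvp : v ∈ (p.toDeleteEdges {s(a, b)} hedge).support := by
    rw [Walk.support_transfer]; exact hv
  exact hx.trans ⟨(p.toDeleteEdges {s(a, b)} hedge).takeUntil v hvp⟩

lemma induce_reachable {S : Set V} :
    ∀ {x y : V} (p : G.Walk x y), (∀ v ∈ p.support, v ∈ S) →
    ∀ (hx : x ∈ S) (hy : y ∈ S), (G.induce S).Reachable ⟨x, hx⟩ ⟨y, hy⟩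
  | _, _, Walk.nil, _, _, _ => Reachable.refl _
  | x, y, @Walk.cons _ _ _ z _ h p, hs, hx, hy =>
    have hv : z ∈ S := hs z (by simp)
    have hadj : (G.induce S).Adj ⟨x, hx⟩ ⟨z, hv⟩ := h
    hadj.reachable.trans (induce_reachable p (fun w hw => hs w (by simp [hw])) hv hy)

end Aux

/-- given an `α`-situation `σ = ((σ₁,w₁),…,(σ_t,w_t))` with
`α ≤ w(T)/2` and shapes `T_i` of `T` isomorphic to the `σ_i`, no one contained in
another, the `T_i` are pairwise disjoint and `σ` occurs in `T`: there is a subtree `T'`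
disjoint from all the `T_i`, and `t` distinct edges `e_i = s(a_i, b_i)`, each with
exactly one end `b_i` in `T'`, such that `T_i` is the component of `T − e_i` not
containing `T'`. -/
theorem stmt_5 {V : Type} [Fintype V] (G : SimpleGraph V) (hG : G.IsTree)
    (w : V → ℕ+) (t : ℕ) (ht : 2 ≤ t)
    (R : Fin t → Type) (H : ∀ i, SimpleGraph (R i)) (r : ∀ i, R i)
    (u : ∀ i, (R i) → ℕ+) (hH : ∀ i, (H i).IsTree)
    (α : ℕ) (hα : α = ∑ i, ∑ᶠ x, (u i x : ℕ)) (hhalf : 2 * α ≤ ∑ v, (w v : ℕ))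
    (a b : Fin t → V) (hshape : ∀ i, IsShape G (a i) (b i))
    (hiso : ∀ i, ShapeIsoTo G w (a i) (b i) (H i) (r i) (u i))
    (hnsub : ∀ i j, i ≠ j → ¬ compSet G (a i) (b i) ⊆ compSet G (a j) (b j)) :
    (∀ i j, i ≠ j → Disjoint (compSet G (a i) (b i)) (compSet G (a j) (b j))) ∧
    ∃ S : Set V, S.Nonempty ∧ (G.induce S).Connected ∧
      (∀ i, Disjoint (compSet G (a i) (b i)) S) ∧
      (∀ i j, i ≠ j → s(a i, b i) ≠ s(a j, b j)) ∧
      (∀ i, b i ∈ S ∧ a i ∉ S) ∧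
      (∀ i, S ⊆ compSet G (b i) (a i)) := by
  classical
  set A : Fin t → Set V := fun i => compSet G (a i) (b i) with hA
  have hadj : ∀ i, G.Adj (a i) (b i) := fun i => (hshape i).1
  -- weights
  have hWt : ∀ i, ∑ᶠ x, (u i x : ℕ) = ∑ v ∈ (A i).toFinset, (w v : ℕ) := by
    intro i
    obtain ⟨φ, -, hφ⟩ := hiso i
    haveI : Fintype (R i) := Fintype.ofEquiv _ φ.toEquiv
    calc ∑ᶠ x, (u i x : ℕ) = ∑ x : R i, (u i x : ℕ) := finsum_eq_sum_of_fintype _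
      _ = ∑ v : (A i), (u i (φ.toEquiv v) : ℕ) := (Equiv.sum_comp φ.toEquiv _).symm
      _ = ∑ v : (A i), (w v.val : ℕ) :=
          Finset.sum_congr rfl (fun v _ => congrArg (fun n : ℕ+ => (n : ℕ)) (hφ v))
      _ = ∑ v ∈ (A i).toFinset, (w v : ℕ) :=
          Finset.sum_set_coe (f := fun v => (w v : ℕ)) (A i)
  have hαsum : α = ∑ i, ∑ v ∈ (A i).toFinset, (w v : ℕ) := by
    rw [hα]; exact Finset.sum_congr rfl fun i _ => hWt i
  have hpos : ∀ i, 1 ≤ ∑ v ∈ (A i).toFinset, (w v : ℕ) := by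
    intro i
    have hm : a i ∈ (A i).toFinset := Set.mem_toFinset.mpr (mem_compSet_self _ _ _)
    calc 1 ≤ (w (a i) : ℕ) := (w (a i)).2
      _ ≤ _ := Finset.single_le_sum (f := fun v => (w v : ℕ)) (fun v _ => Nat.zero_le _) hm
  have hnonuniv : ∀ i j, i ≠ j → ∃ v, v ∉ A i ∧ v ∉ A j := by
    intro i j hij
    by_contra hcon
    push_neg at hcon
    have huniv : (A i).toFinset ∪ (A j).toFinset = Finset.univ := by
      apply Finset.eq_univ_of_forall
      intro v
      simp only [Finset.mem_union, Set.mem_toFinset]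
      by_cases h : v ∈ A i
      · exact Or.inl h
      · exact Or.inr (hcon v h)
    have h1 : ∑ v : V, (w v : ℕ) ≤
        ∑ v ∈ (A i).toFinset, (w v : ℕ) + ∑ v ∈ (A j).toFinset, (w v : ℕ) := by
      have h2 := Finset.sum_union_inter (s₁ := (A i).toFinset) (s₂ := (A j).toFinset)
        (f := fun v => (w v : ℕ))
      rw [huniv] at h2
      omega
    have h2 : ∑ v ∈ (A i).toFinset, (w v : ℕ) + ∑ v ∈ (A j).toFinset, (w v : ℕ) ≤ α := by
      rw [hαsum]
      calc _ = ∑ k ∈ {i, j}, ∑ v ∈ (A k).toFinset, (w v : ℕ) := (Finset.sum_pair hij).symm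
        _ ≤ _ := Finset.sum_le_sum_of_subset (Finset.subset_univ _)
    have h3 : 1 ≤ α := le_trans (hpos i) (by
      rw [hαsum]
      exact Finset.single_le_sum (f := fun k => ∑ v ∈ (A k).toFinset, (w v : ℕ))
        (fun k _ => Nat.zero_le _) (Finset.mem_univ i))
    omega
  -- distinct edges
  have hedges : ∀ i j, i ≠ j → s(a i, b i) ≠ s(a j, b j) := by
    intro i j hij heq
    rcases Sym2.eq_iff.mp heq with ⟨h1, h2⟩ | ⟨h1, h2⟩
    · exact hnsub i j hij (by rw [h1, h2])
    · obtain ⟨v, hvi, hvj⟩ := hnonuniv i j hij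
      have hv : v ∈ compSet G (b i) (a i) := by
        rw [compSet_compl hG (hadj i)]; exact hvi
      apply hvj
      show v ∈ compSet G (a j) (b j)
      rw [← h2, ← h1]
      exact hv
  -- both ends of each other edge lie in the complement side
  have hside : ∀ i j, i ≠ j →
      a j ∈ compSet G (b i) (a i) ∧ b j ∈ compSet G (b i) (a i) := by
    intro i j hij
    have hcompl := compSet_compl hG (hadj i)
    have hreach : (G.deleteEdges {s(a i, b i)}).Reachable (a j) (b j) := by
      refine Adj.reachable ?_
      simp only [deleteEdges_adj, Set.mem_singleton_iff]
      exact ⟨hadj j, hedges j i hij.symm⟩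
    suffices h : a j ∉ A i by
      have hbj : b j ∉ A i := fun hb => h (hb.trans hreach.symm)
      rw [hcompl]; exact ⟨h, hbj⟩
    intro haj
    have hc : a j ∉ compSet G (b i) (a i) := by
      rw [hcompl]; simpa using haj
    have hone := one_side (G := G) (a := b i) (b := a i) (c := a j) (d := b j) hc
    rcases em (b i ∈ compSet G (a j) (b j)) with hb | hb
    · obtain ⟨v, hvi, hvj⟩ := hnonuniv i j hij
      have hv : v ∈ compSet G (b i) (a i) := by rw [hcompl]; exact hvi
      exact hvj (hb.trans (hone v hv))
    · have hb' : b i ∈ compSet G (b j) (a j) := by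
        rw [compSet_compl hG (hadj j)]; exact hb
      apply hnsub j i hij.symm
      intro v hv
      by_contra hvAi
      have hvBi : v ∈ compSet G (b i) (a i) := by rw [hcompl]; exact hvAi
      have hvBj : v ∈ compSet G (b j) (a j) := hb'.trans (reach_swap (hone v hvBi))
      rw [compSet_compl hG (hadj j)] at hvBj
      exact hvBj hv
  -- each A i is contained in the far side of every other edge
  have hsub : ∀ i j, i ≠ j → A i ⊆ compSet G (b j) (a j) := by
    intro i j hij v hv
    have hc : a j ∉ compSet G (a i) (b i) := by
      have h1 := (hside i j hij).1
      rw [compSet_compl hG (hadj i)] at h1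
      exact h1
    have hone := one_side (G := G) (a := a i) (b := b i) (c := a j) (d := b j) hc
    exact ((hside j i hij.symm).1).trans (reach_swap (hone v hv))
  have hdisj : ∀ i j, i ≠ j → Disjoint (A i) (A j) := by
    intro i j hij
    rw [Set.disjoint_left]
    intro v hvi hvj
    have hv := hsub i j hij hvi
    rw [compSet_compl hG (hadj j)] at hv
    exact hv hvj
  refine ⟨hdisj, ⋂ i, compSet G (b i) (a i), ?_, ?_, ?_, hedges, ?_, ?_⟩
  · -- nonempty
    exact ⟨b ⟨0, by omega⟩, Set.mem_iInter.mpr (fun i => by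
      rcases eq_or_ne i ⟨0, by omega⟩ with rfl | h
      · exact mem_compSet_self G _ _
      · exact (hside i _ h).2)⟩
  · -- connected
    have hSsub : ∀ i, (⋂ k, compSet G (b k) (a k)) ⊆ compSet G (b i) (a i) :=
      fun i => Set.iInter_subset _ i
    rw [connected_iff]
    refine ⟨?_, ⟨⟨b ⟨0, by omega⟩, Set.mem_iInter.mpr (fun i => by
      rcases eq_or_ne i ⟨0, by omega⟩ with rfl | h
      · exact mem_compSet_self G _ _
      · exact (hside i _ h).2)⟩⟩⟩
    rintro ⟨x, hx⟩ ⟨y, hy⟩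
    obtain ⟨q⟩ := hG.isConnected.preconnected x y
    have hsupp : ∀ v ∈ q.bypass.support, v ∈ ⋂ k, compSet G (b k) (a k) := by
      intro v hv
      apply Set.mem_iInter.mpr
      intro i
      exact support_subset_compSet hG (hadj i).symm q.bypass q.bypass_isPath
        (hSsub i hx) (hSsub i hy) v hv
    exact induce_reachable q.bypass hsupp hx hy
  · -- disjointness from S
    intro i
    rw [Set.disjoint_left]
    intro v hvi hvS
    have hv := Set.mem_iInter.mp hvS i
    rw [compSet_compl hG (hadj i)] at hv
    exact hv hvi
  · -- b i ∈ S, a i ∉ S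
    intro i
    constructor
    · exact Set.mem_iInter.mpr (fun k => by
        rcases eq_or_ne k i with rfl | h
        · exact mem_compSet_self G _ _
        · exact (hside k i h).2)
    · intro hmem
      have hv := Set.mem_iInter.mp hmem i
      rw [compSet_compl hG (hadj i)] at hv
      exact hv (mem_compSet_self G _ _)
  · exact fun i => Set.iInter_subset _ i
end

section
/- Let T be a weighted tree and σ₁,…,σ_t weighted rooted trees whose total weights sum to at most w(T)/2. If T_i and T_j are shapes of T isomorphic to σ_i and σ_j respectively (i ≠ j), and some shape T_s of T is contained in both T_i and T_j, then T_i ⊆ T_j or T_j ⊆ T_i. -/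
open SimpleGraph

/-- Total weight of a set of vertices. -/
noncomputable def wsum {V : Type} (w : V → ℕ+) (S : Set V) : ℕ :=
  ∑ᶠ v ∈ S, (w v : ℕ)

section Aux

variable {V : Type} {G : SimpleGraph V}

/-- In a tree, each edge is a bridge. -/
lemma tree_bridge (hG : G.IsTree) {a b : V} (hab : G.Adj a b) :
    ¬ (G.deleteEdges {s(a, b)}).Reachable a b := by
  have := (isAcyclic_iff_forall_adj_isBridge.mp hG.IsAcyclic) hab
  exact this

lemma reach_or_aux (a b : V) {u v : V} (p : G.Walk u v)
    (hu : (G.deleteEdges {s(a, b)}).Reachable a u ∨ (G.deleteEdges {s(a, b)}).Reachable b u) :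
    (G.deleteEdges {s(a, b)}).Reachable a v ∨ (G.deleteEdges {s(a, b)}).Reachable b v := by
  induction p with
  | nil => exact hu
  | @cons x c _ h p ih =>
    apply ih
    by_cases he : s(x, c) = s(a, b)
    · rw [Sym2.eq_iff] at he
      rcases he with ⟨rfl, rfl⟩ | ⟨rfl, rfl⟩
      · exact Or.inr Reachable.rfl
      · exact Or.inl Reachable.rfl
    · have hadj : (G.deleteEdges {s(a, b)}).Adj x c := by
        rw [deleteEdges_adj]
        exact ⟨h, he⟩
      rcases hu with h1 | h1
      · exact Or.inl (h1.trans hadj.reachable)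
      · exact Or.inr (h1.trans hadj.reachable)

/-- Every vertex is reachable from `a` or from `b` after deleting `s(a,b)`. -/
lemma reach_or (hG : G.Connected) (a b v : V) :
    (G.deleteEdges {s(a, b)}).Reachable a v ∨ (G.deleteEdges {s(a, b)}).Reachable b v := by
  obtain ⟨p⟩ := hG a v
  exact reach_or_aux a b p (Or.inl Reachable.rfl)

lemma not_mem_compSet_iff (hG : G.IsTree) {a b : V} (hab : G.Adj a b) {v : V} :
    v ∉ compSet G a b ↔ v ∈ compSet G b a := by
  have hswap : s(b, a) = s(a, b) := Sym2.eq_swap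
  constructor
  · intro hv
    rcases reach_or hG.isConnected a b v with h | h
    · exact absurd h hv
    · simpa [compSet, hswap] using h
  · intro hv hv'
    have h1 : (G.deleteEdges {s(a, b)}).Reachable b v := by
      simpa [compSet, hswap] using hv
    exact tree_bridge hG hab (hv'.trans h1.symm)

/-- If a walk (in `G` minus some edge set) goes from inside `compSet G a b` to outside,
then `a` is on its support. -/
lemma mem_support_of_cross (hG : G.IsTree) {a b : V} (hab : G.Adj a b) {u v : V}
    (hu : u ∈ compSet G a b) (hv : v ∉ compSet G a b) {s : Set (Sym2 V)}
    (p : (G.deleteEdges s).Walk u v) : a ∈ p.support := by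
  by_cases he : s(a, b) ∈ p.edges
  · exact p.fst_mem_support_of_mem_edges he
  · exfalso
    have hq := p.toDeleteEdges {s(a, b)} (fun e' he' => by
      intro h; rw [Set.mem_singleton_iff] at h; exact he (h ▸ he'))
    have hle : (G.deleteEdges s).deleteEdges {s(a, b)} ≤ G.deleteEdges {s(a, b)} := by
      intro x y hxy
      rw [deleteEdges_adj] at hxy ⊢
      exact ⟨(deleteEdges_adj.mp hxy.1).1, hxy.2⟩
    have : (G.deleteEdges {s(a, b)}).Reachable u v := (Reachable.mono hle) ⟨hq⟩
    exact hv (hu.trans this)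

lemma wsum_eq (w : V → ℕ+) (S : Set V) (hS : S.Finite) :
    wsum w S = ∑ v ∈ hS.toFinset, (w v : ℕ) := by
  rw [wsum, ← finsum_mem_coe_finset, Set.Finite.coe_toFinset]

end Aux

/-- if the total weights of `T_i` and `T_j` sum to at most `w(T)/2`
(they are among shapes realizing an α-situation with α ≤ w(T)/2), and a shape `T_s`
of `T` is contained in both shapes `T_i` and `T_j`, then `T_i ⊆ T_j` or `T_j ⊆ T_i`. -/
theorem stmt_6 {V : Type} [Fintype V] (G : SimpleGraph V) (hG : G.IsTree)
    (w : V → ℕ+) (ai bi aj bj as bs : V)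
    (hi : IsShape G ai bi) (hj : IsShape G aj bj) (hs : IsShape G as bs)
    (hweight : 2 * (wsum w (compSet G ai bi) + wsum w (compSet G aj bj)) ≤
      ∑ v, (w v : ℕ))
    (hsi : compSet G as bs ⊆ compSet G ai bi)
    (hsj : compSet G as bs ⊆ compSet G aj bj) :
    compSet G ai bi ⊆ compSet G aj bj ∨ compSet G aj bj ⊆ compSet G ai bi := by
  classical
  by_contra hcon
  obtain ⟨h1, h2⟩ := not_or.mp hcon
  rw [Set.not_subset] at h1 h2
  obtain ⟨x, hxA, hxB⟩ := h1
  obtain ⟨y, hyB, hyA⟩ := h2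
  -- a common vertex z
  have hSne : (compSet G as bs).Nonempty := by
    rcases Set.eq_empty_or_nonempty (compSet G as bs) with h | h
    · exfalso; have h2 := hs.2.1; rw [h, Set.ncard_empty] at h2; omega
    · exact h
  obtain ⟨z, hz⟩ := hSne
  have hzA : z ∈ compSet G ai bi := hsi hz
  have hzB : z ∈ compSet G aj bj := hsj hz
  -- `ai ∈ B`: walk from z to y inside G - e_j crosses e_i
  have haiB : ai ∈ compSet G aj bj := by
    obtain ⟨p⟩ := hzB.symm.trans hyB
    have hsup := mem_support_of_cross hG hi.1 hzA hyA p
    exact hzB.trans ⟨p.takeUntil ai hsup⟩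
  -- every vertex is in A ∪ B
  have hcover : ∀ v, v ∈ compSet G ai bi ∨ v ∈ compSet G aj bj := by
    intro v
    by_contra hv
    push_neg at hv
    obtain ⟨hvA, hvB⟩ := hv
    have hxB' : x ∈ compSet G bj aj := (not_mem_compSet_iff hG hj.1).mp hxB
    have hvB' : v ∈ compSet G bj aj := (not_mem_compSet_iff hG hj.1).mp hvB
    obtain ⟨p⟩ := hxB'.symm.trans hvB'
    have hsup := mem_support_of_cross hG hi.1 hxA hvA p
    have haiB' : ai ∈ compSet G bj aj := hxB'.trans ⟨p.takeUntil ai hsup⟩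
    exact (not_mem_compSet_iff hG hj.1).mpr haiB' haiB
  -- weight contradiction
  have hfA : (compSet G ai bi).Finite := Set.toFinite _
  have hfB : (compSet G aj bj).Finite := Set.toFinite _
  have hA := wsum_eq w (compSet G ai bi) hfA
  have hB := wsum_eq w (compSet G aj bj) hfB
  have hunion : hfA.toFinset ∪ hfB.toFinset = Finset.univ := by
    ext v
    simpa [Set.Finite.mem_toFinset] using hcover v
  have hsum : ∑ v, (w v : ℕ) ≤
      wsum w (compSet G ai bi) + wsum w (compSet G aj bj) := by
    rw [hA, hB, ← Finset.sum_union_inter]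
    calc ∑ v, (w v : ℕ)
        = ∑ v ∈ hfA.toFinset ∪ hfB.toFinset, (w v : ℕ) := by
          rw [hunion]
      _ ≤ _ := Nat.le_add_right _ _
  have hApos : 0 < wsum w (compSet G ai bi) := by
    rw [hA]
    have hxmem : x ∈ hfA.toFinset := hfA.mem_toFinset.mpr hxA
    calc 0 < (w x : ℕ) := (w x).pos
      _ ≤ _ := Finset.single_le_sum (f := fun v => (w v : ℕ)) (fun v _ => Nat.zero_le _) hxmem
  omega
end

section
/- For a graph G = (V,E) and positive integers k, the q-chromatic function M_G(k,q) = ∑_{s proper k-colourings of G} q^{∑_{v∈V} s(v)} satisfies M_G(k,q) = ∑_{A ⊆ E} (−1)^{|A|} ∏_{W ∈ com(A)} ( q^{|W|·0} + q^{|W|·1} + ⋯ + q^{|W|(k−1)} ), where com(A) is the set of connected components of the spanning subgraph (V,A), |W| is the number of vertices of W, and (k)_{q^{|W|}} denotes 1 + q^{|W|} + ⋯ + q^{|W|(k−1)}. -/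
open SimpleGraph

lemma my_neg_one_sum {α : Type} [DecidableEq α] (x : Finset α) {R : Type} [CommRing R] :
    (∑ m ∈ x.powerset, (-1 : R) ^ m.card) = if x = ∅ then 1 else 0 := by
  have h := congrArg (fun z : ℤ => (z : R)) (Finset.sum_powerset_neg_one_pow_card (x := x))
  push_cast at h
  rw [h]

lemma my_const_of_reachable {V : Type} {H : SimpleGraph V} {k : ℕ} {s : V → Fin k}
    (hs : ∀ u v, H.Adj u v → s u = s v) {u v : V} (h : H.Reachable u v) : s u = s v := by
  obtain ⟨p⟩ := h
  induction p with
  | nil => rfl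
  | cons h p ih => exact (hs _ _ h).trans ih

open Classical in
lemma my_comp_prod {V : Type} [Fintype V] (H : SimpleGraph V) (k : ℕ) {R : Type}
    [CommRing R] (q : R) :
    (∏ᶠ c : H.ConnectedComponent, ∑ i ∈ Finset.range k, q ^ (c.supp.ncard * i)) =
      ∑ s ∈ Finset.univ.filter (fun s : V → Fin k => ∀ u v, H.Adj u v → s u = s v),
        q ^ (∑ v, (s v).val) := by
  classical
  haveI : Fintype H.ConnectedComponent := Fintype.ofFinite _
  have hsupp : ∀ c : H.ConnectedComponent,
      c.supp.ncard =
        (Finset.univ.filter (fun v => H.connectedComponentMk v = c)).card := by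
    intro c
    rw [Set.ncard_eq_toFinset_card']
    congr 1
    ext v
    simp [SimpleGraph.ConnectedComponent.mem_supp_iff]
  rw [finprod_eq_prod_of_fintype]
  have h1 : ∀ c : H.ConnectedComponent,
      (∑ i ∈ Finset.range k, q ^ (c.supp.ncard * i)) =
      ∑ i : Fin k, q ^ (c.supp.ncard * (i : ℕ)) :=
    fun c => (Fin.sum_univ_eq_sum_range (fun i => q ^ (c.supp.ncard * i)) k).symm
  simp_rw [h1]
  rw [Finset.prod_univ_sum, Fintype.piFinset_univ]
  have h2 : ∀ f : H.ConnectedComponent → Fin k,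
      (∏ c, q ^ (c.supp.ncard * ((f c : ℕ)))) =
        q ^ (∑ v, (f (H.connectedComponentMk v) : ℕ)) := by
    intro f
    rw [Finset.prod_pow_eq_pow_sum]
    congr 1
    rw [← Finset.sum_fiberwise (Finset.univ : Finset V) H.connectedComponentMk
      (fun v => (f (H.connectedComponentMk v) : ℕ))]
    refine Finset.sum_congr rfl fun c _ => ?_
    rw [Finset.sum_congr rfl (fun v hv => ?_), Finset.sum_const, smul_eq_mul, hsupp c]
    simp only [Finset.mem_filter] at hv
    rw [hv.2]
  simp_rw [h2]
  refine Finset.sum_nbij' (fun f => fun v => f (H.connectedComponentMk v))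
    (fun s => fun c => s c.out) ?_ ?_ ?_ ?_ ?_
  · intro f _
    simp only [Finset.mem_filter, Finset.mem_univ, true_and]
    intro u v huv
    exact congrArg f (SimpleGraph.ConnectedComponent.connectedComponentMk_eq_of_adj huv)
  · intro s _; exact Finset.mem_univ _
  · intro f _
    funext c
    exact congrArg f c.out_eq
  · intro s hs
    simp only [Finset.mem_filter, Finset.mem_univ, true_and] at hs
    funext v
    exact my_const_of_reachable hs
      (SimpleGraph.ConnectedComponent.exact (H.connectedComponentMk v).out_eq)
  · intro f _; rfl

/-- the q-chromatic function
`M_G(k,q) = ∑_{s proper k-colouring} q^{∑_v s(v)}` satisfies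
`M_G(k,q) = ∑_{A ⊆ E} (−1)^{|A|} ∏_{W ∈ com(A)} (1 + q^{|W|} + ⋯ + q^{|W|(k−1)})`,
as an identity valid for every element `q` of any commutative ring. -/
theorem stmt_11 {V : Type} [Fintype V] (G : SimpleGraph V) (k : ℕ)
    {R : Type} [CommRing R] (q : R) :
    (∑ᶠ (s : V → Fin k) (_ : ∀ u v, G.Adj u v → s u ≠ s v), q ^ (∑ v, (s v).val)) =
      ∑ᶠ (A : Set (Sym2 V)) (_ : A ⊆ G.edgeSet),
        (-1 : R) ^ A.ncard *
          ∏ᶠ c : (SimpleGraph.fromEdgeSet A).ConnectedComponent,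
            ∑ i ∈ Finset.range k, q ^ (c.supp.ncard * i) := by
  classical
  have hL : (∑ᶠ (s : V → Fin k) (_ : ∀ u v, G.Adj u v → s u ≠ s v), q ^ (∑ v, (s v).val)) =
      ∑ s ∈ Finset.univ.filter (fun s : V → Fin k => ∀ u v, G.Adj u v → s u ≠ s v),
        q ^ (∑ v, (s v).val) :=
    finsum_cond_eq_sum_of_cond_iff _ (fun {s} _ => by simp)
  have hR : (∑ᶠ (A : Set (Sym2 V)) (_ : A ⊆ G.edgeSet),
        (-1 : R) ^ A.ncard *
          ∏ᶠ c : (SimpleGraph.fromEdgeSet A).ConnectedComponent,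
            ∑ i ∈ Finset.range k, q ^ (c.supp.ncard * i)) =
      ∑ B ∈ G.edgeFinset.powerset,
        (-1 : R) ^ B.card *
          ∏ᶠ c : (SimpleGraph.fromEdgeSet (↑B : Set (Sym2 V))).ConnectedComponent,
            ∑ i ∈ Finset.range k, q ^ (c.supp.ncard * i) := by
    rw [finsum_cond_eq_sum_of_cond_iff _
      (t := (G.edgeFinset.powerset).image (fun B : Finset (Sym2 V) => (B : Set (Sym2 V)))) ?_]
    · rw [Finset.sum_image (fun B _ C _ h => Finset.coe_injective h)]
      exact Finset.sum_congr rfl fun B _ => by rw [Set.ncard_coe_finset]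
    · intro A _
      constructor
      · intro hA
        refine Finset.mem_image.2 ⟨(G.edgeSet.toFinite.subset hA).toFinset, ?_, ?_⟩
        · rw [Finset.mem_powerset]
          intro e he
          rw [Set.Finite.mem_toFinset] at he
          exact SimpleGraph.mem_edgeFinset.2 (hA he)
        · exact Set.Finite.coe_toFinset _
      · intro hA
        obtain ⟨B, hB, rfl⟩ := Finset.mem_image.1 hA
        rw [← G.coe_edgeFinset]
        exact Finset.coe_subset.2 (Finset.mem_powerset.1 hB)
  rw [hL, hR]
  have key : ∀ B ∈ G.edgeFinset.powerset,
      (-1 : R) ^ B.card * ∏ᶠ c : (fromEdgeSet (↑B : Set (Sym2 V))).ConnectedComponent,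
          ∑ i ∈ Finset.range k, q ^ (c.supp.ncard * i) =
      ∑ s ∈ Finset.univ.filter (fun s : V → Fin k => ∀ u v, s(u, v) ∈ B → s u = s v),
        (-1 : R) ^ B.card * q ^ (∑ v, (s v).val) := by
    intro B _
    rw [my_comp_prod, Finset.mul_sum]
    congr 1
    ext s
    simp only [Finset.mem_filter, Finset.mem_univ, true_and, fromEdgeSet_adj,
      Finset.mem_coe]
    constructor
    · intro h u v he
      by_cases huv : u = v
      · subst huv; rfl
      · exact h u v ⟨he, huv⟩
    · intro h u v hh
      exact h u v hh.1
  rw [Finset.sum_congr rfl key]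
  have hpow : ∀ s : V → Fin k,
      G.edgeFinset.powerset.filter (fun B => ∀ u v, s(u, v) ∈ B → s u = s v) =
      (G.edgeFinset.filter (fun e => ∀ u v, e = s(u, v) → s u = s v)).powerset := by
    intro s
    ext B
    simp only [Finset.mem_filter, Finset.mem_powerset]
    constructor
    · rintro ⟨hBE, h⟩ e heB
      refine Finset.mem_filter.2 ⟨hBE heB, ?_⟩
      intro u v he
      exact h u v (he ▸ heB)
    · intro h
      refine ⟨h.trans (Finset.filter_subset _ _), ?_⟩
      intro u v hm
      exact (Finset.mem_filter.1 (h hm)).2 u v rfl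
  have hM : ∀ s : V → Fin k,
      (G.edgeFinset.filter (fun e => ∀ u v, e = s(u, v) → s u = s v) = ∅) ↔
        (∀ u v, G.Adj u v → s u ≠ s v) := by
    intro s
    rw [Finset.filter_eq_empty_iff]
    constructor
    · intro h u v hadj hsv
      refine h (SimpleGraph.mem_edgeFinset.2 ((SimpleGraph.mem_edgeSet G).2 hadj)) ?_
      intro a b hab
      rw [Sym2.eq_iff] at hab
      rcases hab with ⟨ha, hb⟩ | ⟨ha, hb⟩
      · rw [← ha, ← hb]; exact hsv
      · rw [← ha, ← hb]; exact hsv.symm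
    · intro hproper e he hmono
      revert he hmono
      refine Sym2.ind (fun u v he hmono => ?_) e
      exact hproper u v ((SimpleGraph.mem_edgeSet G).1 (SimpleGraph.mem_edgeFinset.1 he))
        (hmono u v rfl)
  rw [Finset.sum_comm' (s := G.edgeFinset.powerset)
    (t := fun B => Finset.univ.filter (fun s : V → Fin k => ∀ u v, s(u, v) ∈ B → s u = s v))
    (t' := (Finset.univ : Finset (V → Fin k)))
    (s' := fun s => G.edgeFinset.powerset.filter (fun B => ∀ u v, s(u, v) ∈ B → s u = s v))
    (fun B s => by simp only [Finset.mem_filter, Finset.mem_univ, true_and, and_true])]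
  have hinner : ∀ s : V → Fin k,
      (∑ B ∈ G.edgeFinset.powerset.filter (fun B => ∀ u v, s(u, v) ∈ B → s u = s v),
        (-1 : R) ^ B.card * q ^ (∑ v, (s v).val)) =
      if (∀ u v, G.Adj u v → s u ≠ s v) then q ^ (∑ v, (s v).val) else 0 := by
    intro s
    rw [hpow s, ← Finset.sum_mul, my_neg_one_sum]
    by_cases hs : ∀ u v, G.Adj u v → s u ≠ s v
    · rw [if_pos hs, if_pos ((hM s).2 hs), one_mul]
    · rw [if_neg hs, if_neg (fun h => hs ((hM s).1 h)), zero_mul]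
  rw [Finset.sum_congr rfl (fun s _ => hinner s)]
  exact Finset.sum_filter _ _
end

section
/- Let T be a tree and T' the tree obtained from T by identifying each leaf of T with the root (center) of a new 3-vertex star. Then T can be recovered from T': the vertex set of T equals the set of non-leaf vertices of T', and deleting all leaves of T' yields a tree isomorphic to T. Consequently, for trees T₁ and T₂ with at least 2 vertices, T₁ ≅ T₂ if and only if T₁' ≅ T₂'. -/
open SimpleGraph

/-- The tree `T'`: each leaf of `T` is identified with the center of a new 3-vertex
star, i.e. each leaf receives two new pendant neighbours. -/
def attach {V : Type} (G : SimpleGraph V) :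
    SimpleGraph (V ⊕ ({v : V // (G.neighborSet v).ncard = 1} × Fin 2)) where
  Adj x y :=
    match x, y with
    | Sum.inl u, Sum.inl v => G.Adj u v
    | Sum.inl u, Sum.inr p => u = p.1.val
    | Sum.inr p, Sum.inl u => u = p.1.val
    | Sum.inr _, Sum.inr _ => False
  symm := by
    constructor
    rintro (u | p) (v | q) h
    · exact h.symm
    · exact h
    · exact h
    · exact h.elim
  loopless := by
    constructor
    rintro (u | p) h
    · exact G.irrefl h
    · exact h

variable {V W : Type}

lemma attach_adj_inl_inl (G : SimpleGraph V) (u v : V) :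
    (attach G).Adj (Sum.inl u) (Sum.inl v) ↔ G.Adj u v := Iff.rfl

lemma attach_neighborSet_inr (G : SimpleGraph V) (p) :
    (attach G).neighborSet (Sum.inr p) = {Sum.inl p.1.val} := by
  ext x
  cases x with
  | inl u => simp [mem_neighborSet, attach, eq_comm]
  | inr q => simp [mem_neighborSet, attach]

lemma iso_ncard {G : SimpleGraph V} {H : SimpleGraph W} (f : G ≃g H) (v : V) :
    (H.neighborSet (f v)).ncard = (G.neighborSet v).ncard := by
  rw [← Nat.card_coe_set_eq, ← Nat.card_coe_set_eq]
  exact Nat.card_congr (f.mapNeighborSet v).symm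

lemma exists_neighbor [Fintype V] {G : SimpleGraph V} (hG : G.Connected)
    (hc : 2 ≤ Fintype.card V) (v : V) : ∃ w, G.Adj v w := by
  obtain ⟨w, hw⟩ := Fintype.exists_ne_of_one_lt_card (by omega) v
  obtain ⟨p⟩ := hG.preconnected v w
  cases p with
  | nil => exact absurd rfl hw.symm
  | cons h q => exact ⟨_, h⟩

lemma attach_inl_two_le [Fintype V] {G : SimpleGraph V} (hG : G.Connected)
    (hc : 2 ≤ Fintype.card V) (v : V) :
    2 ≤ ((attach G).neighborSet (Sum.inl v)).ncard := by
  rw [show (2:ℕ) ≤ _ ↔ 1 < _ from Iff.rfl, Set.one_lt_ncard (Set.toFinite _)]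
  by_cases hv : (G.neighborSet v).ncard = 1
  · refine ⟨Sum.inr (⟨v, hv⟩, 0), rfl, Sum.inr (⟨v, hv⟩, 1), rfl, by simp⟩
  · obtain ⟨w, hw⟩ := exists_neighbor hG hc v
    have h1 : 1 < (G.neighborSet v).ncard := by
      have : 0 < (G.neighborSet v).ncard :=
        (Set.ncard_pos (Set.toFinite _)).mpr ⟨w, hw⟩
      omega
    obtain ⟨a, ha, b, hb, hab⟩ := (Set.one_lt_ncard (Set.toFinite _)).mp h1
    exact ⟨Sum.inl a, ha, Sum.inl b, hb, by simpa using hab⟩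

/-- `T` can be recovered from `T'`: the non-leaf vertices of `T'` are
exactly the original vertices of `T`, and deleting all leaves of `T'` yields a tree
isomorphic to `T`; consequently, for trees with at least two vertices,
`T₁ ≅ T₂ ↔ T₁' ≅ T₂'`. -/
theorem stmt_13 {V₁ V₂ : Type} [Fintype V₁] [Fintype V₂]
    (G₁ : SimpleGraph V₁) (G₂ : SimpleGraph V₂)
    (h₁ : G₁.IsTree) (h₂ : G₂.IsTree)
    (hc₁ : 2 ≤ Fintype.card V₁) (hc₂ : 2 ≤ Fintype.card V₂) :
    (∀ x, ((attach G₁).neighborSet x).ncard ≠ 1 ↔ ∃ v : V₁, x = Sum.inl v) ∧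
    Nonempty ((attach G₁).induce {x | ((attach G₁).neighborSet x).ncard ≠ 1} ≃g G₁) ∧
    (Nonempty (G₁ ≃g G₂) ↔ Nonempty (attach G₁ ≃g attach G₂)) := by
  have key₁ : ∀ x, ((attach G₁).neighborSet x).ncard ≠ 1 ↔ ∃ v : V₁, x = Sum.inl v := by
    rintro (v | p)
    · exact ⟨fun _ => ⟨v, rfl⟩, fun _ => by
        have := attach_inl_two_le h₁.isConnected hc₁ v; omega⟩
    · simp [attach_neighborSet_inr]
  refine ⟨key₁, ?_, ?_⟩
  · -- induced subgraph iso
    have hS : {x | ((attach G₁).neighborSet x).ncard ≠ 1} = Set.range Sum.inl := by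
      ext x; simp only [Set.mem_setOf_eq, key₁ x, Set.mem_range, eq_comm]
    let E : {x // x ∈ {x | ((attach G₁).neighborSet x).ncard ≠ 1}} ≃ V₁ :=
      (Equiv.setCongr hS).trans (Equiv.ofInjective Sum.inl Sum.inl_injective).symm
    refine ⟨⟨E, ?_⟩⟩
    intro a b
    have ha : Sum.inl (E a) = a.val :=
      Equiv.apply_ofInjective_symm Sum.inl_injective _
    have hb : Sum.inl (E b) = b.val :=
      Equiv.apply_ofInjective_symm Sum.inl_injective _
    rw [← attach_adj_inl_inl, ha, hb]
    simp [comap_adj]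
  · constructor
    · rintro ⟨e⟩
      let leafE : {v : V₁ // (G₁.neighborSet v).ncard = 1} ≃
          {v : V₂ // (G₂.neighborSet v).ncard = 1} :=
        e.toEquiv.subtypeEquiv (fun v => by
          rw [show (G₂.neighborSet (e.toEquiv v)).ncard = (G₁.neighborSet v).ncard from
            iso_ncard e v])
      refine ⟨⟨Equiv.sumCongr e.toEquiv (Equiv.prodCongr leafE (Equiv.refl _)), ?_⟩⟩
      rintro (u | p) (v | q)
      · exact e.map_adj_iff
      · exact Equiv.apply_eq_iff_eq e.toEquiv
      · exact Equiv.apply_eq_iff_eq e.toEquiv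
      · exact Iff.rfl
    · rintro ⟨f⟩
      have claim : ∀ v : V₁, ∃ w : V₂, f (Sum.inl v) = Sum.inl w := by
        intro v
        cases h : f (Sum.inl v) with
        | inl w => exact ⟨w, rfl⟩
        | inr p =>
          exfalso
          have h2 := attach_inl_two_le h₁.isConnected hc₁ v
          have := iso_ncard f (Sum.inl v)
          rw [h, attach_neighborSet_inr, Set.ncard_singleton] at this
          omega
      have claim' : ∀ w : V₂, ∃ v : V₁, f.symm (Sum.inl w) = Sum.inl v := by
        intro w
        cases h : f.symm (Sum.inl w) with
        | inl v => exact ⟨v, rfl⟩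
        | inr p =>
          exfalso
          have h2 := attach_inl_two_le h₂.isConnected hc₂ w
          have := iso_ncard f.symm (Sum.inl w)
          rw [h, attach_neighborSet_inr, Set.ncard_singleton] at this
          omega
      choose g hg using claim
      choose g' hg' using claim'
      refine ⟨⟨⟨g, g', fun v => ?_, fun w => ?_⟩, ?_⟩⟩
      · have := hg' (g v)
        rw [← hg v, RelIso.symm_apply_apply] at this
        exact Sum.inl_injective this.symm
      · have := hg (g' w)
        rw [← hg' w, RelIso.apply_symm_apply] at this
        exact Sum.inl_injective this.symm
      · intro u v
        have : G₂.Adj (g u) (g v) ↔ (attach G₂).Adj (f (Sum.inl u)) (f (Sum.inl v)) := by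
          rw [hg u, hg v]; exact Iff.rfl
        rw [Equiv.coe_fn_mk, this, f.map_adj_iff]; exact Iff.rfl
end
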